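/- Let a_1,…,a_n be distinct elements of a field, g(x) = ∏(x − a_i), and k ∈ ℕ. For 1 ≤ l ≤ n, the coefficient of x^{l−1} in the remainder of x^k modulo g equals (−1)^{n−l} s_{(1^{n−l}, k−n+1)}(a_1,…,a_n) when k ≥ n, where s_{(1^{n−l}, k−n+1)} is the Schur polynomial of the hook-type partition with n−l parts equal to 1 and one part k−n+1 ≥ 1, and also equals 𝔊_{(0^{l−1}, k−l+1, 0^{n−l})}(A). -/

import Mathlib

open Polynomial Finset
open scoped Matrix

/-- The coefficient of `x^{l−1}` in the remainder of `x^k` modulo `∏ (x − aᵢ)` equals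
`(−1)^{n−l} s_{(1^{n−l}, k−n+1)}(A)` (a hook Schur polynomial) and also equals
`𝔊_{(0^{l−1}, k−l+1, 0^{n−l})}(A)`. -/
theorem remainder_coeff_hook_schur {K : Type*} [Field K] {n : ℕ}
    (a : Fin n → K) (ha : Function.Injective a)
    (k : ℕ) (hk : n ≤ k) (g : K[X]) (hg : g = ∏ i, (X - C (a i))) :
    ∀ l : Fin n,
      ((X ^ k) %ₘ g).coeff l =
          (-1 : K) ^ (n - 1 - (l : ℕ)) *
            ((Matrix.of fun s t : Fin n =>
                a t ^ (if (s : ℕ) < (l : ℕ) then (s : ℕ)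
                  else if (s : ℕ) < n - 1 then (s : ℕ) + 1 else k)).det /
              (Matrix.of fun s t : Fin n => a t ^ (s : ℕ)).det) ∧
        ((X ^ k) %ₘ g).coeff l =
          (Matrix.of fun s t : Fin n =>
              a t ^ (if s = l then k else (s : ℕ))).det /
            (Matrix.of fun s t : Fin n => a t ^ (s : ℕ)).det := by
  intro l
  obtain ⟨m, rfl⟩ : ∃ m, n = m + 1 := ⟨n - 1, by have := l.pos; omega⟩
  set r := (X ^ k) %ₘ g with hr
  have hgmonic : g.Monic := by
    rw [hg]; exact monic_prod_of_monic _ _ fun i _ => monic_X_sub_C _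
  have hgdeg : g.degree = (m + 1 : ℕ) := by
    rw [hg, degree_prod]
    simp [degree_X_sub_C]
  -- remainder has small degree
  have hdeg : r.natDegree < m + 1 := by
    rcases eq_or_ne r 0 with h0 | h0
    · simp [h0]
    · have := degree_modByMonic_lt (X ^ k) hgmonic
      rw [← hr, hgdeg] at this
      exact (natDegree_lt_iff_degree_lt h0).mpr this
  -- evaluation of remainder at the roots
  have heval : ∀ t : Fin (m + 1), r.eval (a t) = a t ^ k := by
    intro t
    have h := modByMonic_add_div (X ^ k : K[X]) g
    have hga : g.eval (a t) = 0 := by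
      rw [hg, eval_prod]
      exact Finset.prod_eq_zero (Finset.mem_univ t) (by simp)
    have := congrArg (Polynomial.eval (a t)) h
    simpa [hga] using this
  set V := Matrix.vandermonde a with hV
  have hVdet : V.det ≠ 0 := Matrix.det_vandermonde_ne_zero_iff.mpr ha
  set c : Fin (m + 1) → K := fun s => r.coeff s with hc
  set b : Fin (m + 1) → K := fun t => a t ^ k with hb
  have hsys : V *ᵥ c = b := by
    funext t
    have hev := eval_eq_sum_range' hdeg (a t)
    rw [heval t] at hev
    calc (V *ᵥ c) t = ∑ s : Fin (m + 1), a t ^ (s : ℕ) * c s := by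
          simp [Matrix.mulVec, dotProduct, hV, Matrix.vandermonde]
      _ = ∑ s ∈ Finset.range (m + 1), r.coeff s * a t ^ s := by
          rw [← Fin.sum_univ_eq_sum_range fun i => r.coeff i * a t ^ i]
          exact Finset.sum_congr rfl fun s _ => mul_comm _ _
      _ = b t := by rw [← hev]
  have hcram : Matrix.cramer V b = V.det • c := by
    have h0 : V *ᵥ (Matrix.cramer V b - V.det • c) = 0 := by
      rw [Matrix.mulVec_sub, Matrix.mulVec_cramer, Matrix.mulVec_smul, hsys, sub_self]
    exact sub_eq_zero.mp (Matrix.eq_zero_of_mulVec_eq_zero hVdet h0)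
  -- identify the denominator
  have hden : (Matrix.of fun s t : Fin (m + 1) => a t ^ (s : ℕ)).det = V.det := by
    rw [← Matrix.det_transpose V]
    congr 1
  -- identify the second numerator with updateColumn determinant
  have hnum2 : (Matrix.of fun s t : Fin (m + 1) =>
      a t ^ (if s = l then k else (s : ℕ))).det = (V.updateCol l b).det := by
    rw [← Matrix.det_transpose (V.updateCol l b)]
    congr 1
    ext s t
    simp only [Matrix.transpose_apply, Matrix.updateCol_apply, Matrix.of_apply,
      hV, Matrix.vandermonde, hb]
    split_ifs <;> rfl
  have h2 : r.coeff l = (Matrix.of fun s t : Fin (m + 1) =>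
      a t ^ (if s = l then k else (s : ℕ))).det /
      (Matrix.of fun s t : Fin (m + 1) => a t ^ (s : ℕ)).det := by
    rw [hden, hnum2, eq_div_iff hVdet, ← Matrix.cramer_apply, hcram]
    simp [mul_comm, hc]
  refine ⟨?_, h2⟩
  -- now the hook form: relate the two numerators via a cyclic row permutation
  set i0 : Fin (m + 1) := ⟨m - (l : ℕ), by omega⟩ with hi0
  set τ : Equiv.Perm (Fin (m + 1)) := Fin.revPerm * i0.cycleRange * Fin.revPerm with hτ
  have hτval : ∀ s : Fin (m + 1), (τ s).val =
      if (s : ℕ) < (l : ℕ) then (s : ℕ) else if (s : ℕ) = (l : ℕ) then m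
        else (s : ℕ) - 1 := by
    intro s
    have hsle : (s : ℕ) ≤ m := by omega
    have hlle : (l : ℕ) ≤ m := by omega
    simp only [hτ, Equiv.Perm.mul_apply, Fin.revPerm_apply]
    rcases lt_trichotomy (s : ℕ) (l : ℕ) with h | h | h
    · rw [if_pos h, Fin.cycleRange_of_gt (by
        simp only [Fin.lt_def, hi0, Fin.val_rev]; omega), Fin.rev_rev]
    · rw [if_neg (by omega), if_pos h]
      have hrl : s.rev = i0 := by
        ext; simp only [Fin.val_rev, hi0]; omega
      rw [hrl, Fin.cycleRange_self, Fin.val_rev]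
      simp
    · rw [if_neg (by omega), if_neg (by omega)]
      have hlt : s.rev < i0 := by
        simp only [Fin.lt_def, hi0, Fin.val_rev]; omega
      rw [Fin.cycleRange_of_lt hlt]
      have hlast : s.rev < Fin.last m := lt_of_lt_of_le hlt (Fin.le_last _)
      rw [Fin.val_rev, Fin.val_add_one_of_lt hlast, Fin.val_rev]
      omega
  have hsign : Equiv.Perm.sign τ = (-1 : ℤˣ) ^ (m - (l : ℕ)) := by
    rw [hτ, map_mul, map_mul, mul_comm, ← mul_assoc, Int.units_mul_self, one_mul,
      Fin.sign_cycleRange]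
  set M1 := (Matrix.of fun s t : Fin (m + 1) =>
      a t ^ (if (s : ℕ) < (l : ℕ) then (s : ℕ)
        else if (s : ℕ) < m + 1 - 1 then (s : ℕ) + 1 else k)) with hM1
  set M2 := (Matrix.of fun s t : Fin (m + 1) =>
      a t ^ (if s = l then k else (s : ℕ))) with hM2
  have hsub : M1.submatrix τ id = M2 := by
    ext s t
    simp only [Matrix.submatrix_apply, id, hM1, hM2, Matrix.of_apply]
    have hτs := hτval s
    have hsle : (s : ℕ) ≤ m := Fin.is_le s
    have hlle : (l : ℕ) ≤ m := by omega
    rcases lt_trichotomy (s : ℕ) (l : ℕ) with h | h | h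
    · rw [if_pos h] at hτs
      have hne : s ≠ l := fun he => by rw [he] at h; exact lt_irrefl _ h
      rw [if_neg hne, if_pos (show (τ s).val < (l : ℕ) by omega), hτs]
    · rw [if_neg (by omega), if_pos h] at hτs
      have he : s = l := Fin.ext h
      rw [if_pos he, if_neg (show ¬ (τ s).val < (l : ℕ) by omega),
        if_neg (show ¬ (τ s).val < m + 1 - 1 by omega)]
    · rw [if_neg (by omega), if_neg (by omega)] at hτs
      have hne : s ≠ l := fun he => by rw [he] at h; exact lt_irrefl _ h
      rw [if_neg hne, if_neg (show ¬ (τ s).val < (l : ℕ) by omega),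
        if_pos (show (τ s).val < m + 1 - 1 by omega)]
      congr 1
      omega
  have hdet21 : M2.det = (-1 : K) ^ (m - (l : ℕ)) * M1.det := by
    have hdp := Matrix.det_permute τ M1
    rw [hsub, hsign] at hdp
    rw [hdp]
    norm_num
  rw [h2, hdet21, Nat.add_sub_cancel, mul_div_assoc]
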